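/- Let A ≠ 0 and define f : ℝ² → ℝ³ by f(t,s) = (t, Real.exp (−s) · Real.cos (A·s), Real.exp (−s) · Real.sin (A·s)) (the cylinder over a logarithmic spiral), and let K : ℝ³ → ℝ³ be the Killing vector field K(x,y,z) = (0, −z, y) generating rotations about the x-axis. Then for every (t,s) ∈ ℝ²: ‖K(f(t,s))‖ = Real.exp (−s), and the tangential component of K(f(t,s)) at (t,s) (the orthogonal projection of K(f(t,s)) onto the range of fderiv ℝ f (t,s)) has norm (|A| / Real.sqrt (1 + A²)) · ‖K(f(t,s))‖. In particular the ratio of the norms of the normal and tangential components of K along f is the constant 1/|A|, i.e. the cylinder over the logarithmic spiral has the constant ratio property with respect to the Killing vector field K. -/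

import Mathlib

set_option maxHeartbeats 1000000
open RealInnerProductSpace

noncomputable def tangentialComponent {E F : Type*} [NormedAddCommGroup E]
    [NormedSpace ℝ E] [NormedAddCommGroup F] [InnerProductSpace ℝ F]
    [FiniteDimensional ℝ F] (f : E → F) (p : E) (w : F) : F :=
  (Submodule.orthogonalProjectionOnto (LinearMap.range (fderiv ℝ f p : E →ₗ[ℝ] F)) w : F)

private noncomputable def v1 : EuclideanSpace ℝ (Fin 3) := (WithLp.equiv 2 (Fin 3 → ℝ)).symm ![1,0,0]
private noncomputable def v2 (A s : ℝ) : EuclideanSpace ℝ (Fin 3) := (WithLp.equiv 2 (Fin 3 → ℝ)).symm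
  ![0, -(Real.exp (-s) * Real.cos (A*s)) - A * (Real.exp (-s) * Real.sin (A*s)),
       -(Real.exp (-s) * Real.sin (A*s)) + A * (Real.exp (-s) * Real.cos (A*s))]

private noncomputable def Lder (A s : ℝ) : (ℝ × ℝ) →L[ℝ] EuclideanSpace ℝ (Fin 3) :=
  (ContinuousLinearMap.fst ℝ ℝ ℝ).smulRight v1 + (ContinuousLinearMap.snd ℝ ℝ ℝ).smulRight (v2 A s)

private theorem hder (A : ℝ) (p : ℝ × ℝ) :
    HasFDerivAt (fun q : ℝ × ℝ => ((WithLp.equiv 2 (Fin 3 → ℝ)).symm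
      ![q.1, Real.exp (-q.2) * Real.cos (A * q.2),
        Real.exp (-q.2) * Real.sin (A * q.2)] : EuclideanSpace ℝ (Fin 3))) (Lder A p.2) p := by
  have h2 : HasDerivAt (fun s : ℝ => Real.exp (-s) * Real.cos (A*s))
      (-(Real.exp (-p.2) * Real.cos (A*p.2)) - A * (Real.exp (-p.2) * Real.sin (A*p.2))) p.2 := by
    have he : HasDerivAt (fun s : ℝ => Real.exp (-s)) (-Real.exp (-p.2)) p.2 := by
      simpa [Function.comp_def] using (Real.hasDerivAt_exp (-p.2)).comp p.2 (hasDerivAt_neg p.2)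
    have hc : HasDerivAt (fun s : ℝ => Real.cos (A*s)) (-Real.sin (A*p.2) * A) p.2 := by
      simpa [Function.comp_def] using (Real.hasDerivAt_cos (A*p.2)).comp p.2 ((hasDerivAt_id p.2).const_mul A)
    have := he.mul hc
    refine this.congr_deriv ?_
    ring
  have h3 : HasDerivAt (fun s : ℝ => Real.exp (-s) * Real.sin (A*s))
      (-(Real.exp (-p.2) * Real.sin (A*p.2)) + A * (Real.exp (-p.2) * Real.cos (A*p.2))) p.2 := by
    have he : HasDerivAt (fun s : ℝ => Real.exp (-s)) (-Real.exp (-p.2)) p.2 := by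
      simpa [Function.comp_def] using (Real.hasDerivAt_exp (-p.2)).comp p.2 (hasDerivAt_neg p.2)
    have hc : HasDerivAt (fun s : ℝ => Real.sin (A*s)) (Real.cos (A*p.2) * A) p.2 := by
      simpa [Function.comp_def] using (Real.hasDerivAt_sin (A*p.2)).comp p.2 ((hasDerivAt_id p.2).const_mul A)
    have := he.mul hc
    refine this.congr_deriv ?_
    ring
  rw [← (EuclideanSpace.equiv (Fin 3) ℝ).comp_hasFDerivAt_iff]
  apply hasFDerivAt_pi''
  intro i
  fin_cases i
  · refine hasFDerivAt_fst.congr_fderiv ?_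
    ext q <;> simp [Lder, v1, v2]
  · refine (h2.hasFDerivAt.comp p hasFDerivAt_snd).congr_fderiv ?_
    ext q <;> simp [Lder, v1, v2]
  · refine (h3.hasFDerivAt.comp p hasFDerivAt_snd).congr_fderiv ?_
    ext q <;> simp [Lder, v1, v2]

private theorem norm3 (x : EuclideanSpace ℝ (Fin 3)) (T : ℝ) (hT : 0 ≤ T)
    (h : x 0 ^ 2 + x 1 ^ 2 + x 2 ^ 2 = T ^ 2) : ‖x‖ = T := by
  rw [EuclideanSpace.norm_eq]
  simp only [Real.norm_eq_abs, sq_abs, Fin.sum_univ_three]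
  rw [h, Real.sqrt_sq hT]

theorem stmt16 (A : ℝ) (hA : A ≠ 0)
    (f : ℝ × ℝ → EuclideanSpace ℝ (Fin 3))
    (hf : ∀ p : ℝ × ℝ, f p = (WithLp.equiv 2 (Fin 3 → ℝ)).symm
      ![p.1, Real.exp (-p.2) * Real.cos (A * p.2),
        Real.exp (-p.2) * Real.sin (A * p.2)])
    (K : EuclideanSpace ℝ (Fin 3) → EuclideanSpace ℝ (Fin 3))
    (hK : ∀ y : EuclideanSpace ℝ (Fin 3),
      K y = (WithLp.equiv 2 (Fin 3 → ℝ)).symm ![0, -(y 2), y 1]) :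
    ∀ p : ℝ × ℝ,
      ‖K (f p)‖ = Real.exp (-p.2) ∧
      ‖tangentialComponent f p (K (f p))‖ =
        |A| / Real.sqrt (1 + A ^ 2) * ‖K (f p)‖ ∧
      ‖K (f p) - tangentialComponent f p (K (f p))‖ /
        ‖tangentialComponent f p (K (f p))‖ = 1 / |A| := by
  intro p
  set s := p.2 with hs
  set es := Real.exp (-s) with hes
  set cn := Real.cos (A * s) with hcn
  set sn := Real.sin (A * s) with hsn
  have hes0 : 0 < es := Real.exp_pos _
  have htrig : sn ^ 2 + cn ^ 2 = 1 := Real.sin_sq_add_cos_sq _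
  have hA2 : (0:ℝ) < 1 + A ^ 2 := by positivity
  have hsq : Real.sqrt (1 + A ^ 2) ^ 2 = 1 + A ^ 2 := Real.sq_sqrt hA2.le
  have hsqpos : 0 < Real.sqrt (1 + A ^ 2) := Real.sqrt_pos.mpr hA2
  have hw : K (f p) = ((WithLp.equiv 2 (Fin 3 → ℝ)).symm ![0, -(es * sn), es * cn] :
      EuclideanSpace ℝ (Fin 3)) := by
    rw [hf, hK]
    ext i
    fin_cases i <;> simp [hes, hcn, hsn, hs]
  have hD : HasFDerivAt f (Lder A s) p := by
    have := hder A p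
    apply this.congr_of_eventuallyEq
    filter_upwards with q using hf q
  have hL : fderiv ℝ f p = Lder A s := hD.fderiv
  have hv2 : ∀ i, (v2 A s) i = ![0, -(es * cn) - A * (es * sn), -(es * sn) + A * (es * cn)] i := by
    intro i
    fin_cases i <;> simp [v2, hes, hcn, hsn]
  have hproj : tangentialComponent f p (K (f p)) = (A / (1 + A ^ 2)) • v2 A s := by
    rw [tangentialComponent, hw]
    rw [Submodule.coe_orthogonalProjectionOnto_apply]
    apply Submodule.eq_starProjection_of_mem_of_inner_eq_zero
    · rw [hL]
      exact ⟨(0, A / (1 + A ^ 2)), by simp [Lder]⟩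
    · intro u hu
      rw [hL] at hu
      obtain ⟨⟨a, b⟩, rfl⟩ := hu
      simp only [Lder, ContinuousLinearMap.add_apply, ContinuousLinearMap.smulRight_apply,
        ContinuousLinearMap.coe_fst', ContinuousLinearMap.coe_snd', ContinuousLinearMap.coe_coe]
      rw [inner_sub_left]
      simp only [PiLp.inner_apply, RCLike.inner_apply, conj_trivial]
      simp only [PiLp.add_apply, PiLp.smul_apply, smul_eq_mul, Fin.sum_univ_three]
      simp only [hv2, v1, WithLp.equiv_symm_apply, PiLp.toLp_apply,
        Matrix.cons_val_zero, Matrix.cons_val_one, Matrix.head_cons,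
        Matrix.cons_val_two, Matrix.tail_cons]
      field_simp
      ring
  have hnv2 : ‖v2 A s‖ = es * Real.sqrt (1 + A ^ 2) := by
    apply norm3
    · positivity
    · simp only [hv2, Matrix.cons_val_zero, Matrix.cons_val_one, Matrix.head_cons,
        Matrix.cons_val_two, Matrix.tail_cons]
      rw [mul_pow, hsq]
      nlinarith [htrig]
  have h1 : ‖K (f p)‖ = es := by
    rw [hw]
    apply norm3 _ _ hes0.le
    simp only [WithLp.equiv_symm_apply, PiLp.toLp_apply, Matrix.cons_val_zero, Matrix.cons_val_one,
      Matrix.head_cons, Matrix.cons_val_two, Matrix.tail_cons]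
    nlinarith [htrig]
  have h2 : ‖tangentialComponent f p (K (f p))‖ = |A| / Real.sqrt (1 + A ^ 2) * es := by
    rw [hproj, norm_smul, hnv2]
    rw [Real.norm_eq_abs, abs_div, abs_of_pos hA2]
    field_simp
    linear_combination hsq
  have h3 : ‖K (f p) - tangentialComponent f p (K (f p))‖ = es / Real.sqrt (1 + A ^ 2) := by
    rw [hproj, hw]
    apply norm3
    · positivity
    · simp only [PiLp.sub_apply, PiLp.smul_apply, smul_eq_mul,
        hv2, WithLp.equiv_symm_apply, PiLp.toLp_apply, Matrix.cons_val_zero, Matrix.cons_val_one,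
        Matrix.head_cons, Matrix.cons_val_two, Matrix.tail_cons]
      rw [div_pow, hsq]
      field_simp
      linear_combination (es ^ 2 * (1 + A ^ 2)) * htrig
  refine ⟨h1, by rw [h2, h1], ?_⟩
  rw [h2, h3]
  have hAabs : (0:ℝ) < |A| := abs_pos.mpr hA
  field_simp
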